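/- Let m ≥ 1 and k ≥ 2 be integers, let v : Finset (Fin m) → ℝ be any set function, and regard G_k^v as a polynomial function of x : Fin m → ℝ. Then for every x : Fin m → ℝ and all i, j : Fin m, the second-order partial derivative ∂²G_k^v/∂x_i∂x_j at x equals ((k−1)/k) · ∑_{S : Finset (Fin m)} Pr_{k−2}(x)(S) · H^v_S(i,j), where Pr_{k−2}(x)(S) = ∑ over f : Fin (k−2) → Option (Fin m) with proj(f) = S of ∏_{s} w_x(f s) is the (k−2)-draw lottery probability with the same per-draw weights w_x. -/

import Mathlib

open Finset

/-- Per-draw weights: project `j` is drawn with probability `x j / k`, and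
`none` (no project) with the remaining probability `1 - (∑ j, x j)/k`. -/
noncomputable def lotW {m : ℕ} (k : ℕ) (x : Fin m → ℝ) : Option (Fin m) → ℝ
  | some j => x j / k
  | none => 1 - (∑ j, x j) / k

/-- Probability of a particular draw function `f : Fin t → Option (Fin m)`,
with per-draw weights determined by `k` and `x`. -/
noncomputable def lotP {m : ℕ} (k t : ℕ) (x : Fin m → ℝ)
    (f : Fin t → Option (Fin m)) : ℝ :=
  ∏ s, lotW k x (f s)

/-- The set of projects chosen by a draw function `f`. -/
def lotProj {m t : ℕ} (f : Fin t → Option (Fin m)) : Finset (Fin m) :=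
  Finset.univ.filter (fun j => ∃ s, f s = some j)


/-- Expected value of the set function `v` under the `k`-bounded-lottery
rounding scheme `r_k` applied to `x`. -/
noncomputable def lotG {m : ℕ} (k : ℕ) (v : Finset (Fin m) → ℝ)
    (x : Fin m → ℝ) : ℝ :=
  ∑ f : Fin k → Option (Fin m), lotP k k x f * v (lotProj f)

/-- Partial derivative of `F : (Fin m → ℝ) → ℝ` with respect to coordinate `j`,
taken via `deriv` along coordinate updates. -/
noncomputable def pd {m : ℕ} (j : Fin m) (F : (Fin m → ℝ) → ℝ)
    (x : Fin m → ℝ) : ℝ :=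
  deriv (fun t => F (Function.update x j t)) (x j)

/-- The discrete Hessian matrix of the set function `v` at the set `S`. -/
def dHess {m : ℕ} (v : Finset (Fin m) → ℝ) (S : Finset (Fin m)) (i j : Fin m) : ℝ :=
  v (S ∪ {i, j}) - v (S ∪ {i}) - v (S ∪ {j}) + v S

noncomputable def lotB {m : ℕ} (k : ℕ) (j : Fin m) : Option (Fin m) → ℝ
  | some l => if l = j then 1/(k:ℝ) else 0
  | none => -(1/(k:ℝ))

lemma hasDerivAt_lotW {m : ℕ} (k : ℕ) (x : Fin m → ℝ) (j : Fin m) (o : Option (Fin m)) :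
    HasDerivAt (fun t => lotW k (Function.update x j t) o) (lotB k j o) (x j) := by
  match o with
  | some l =>
    by_cases hl : l = j
    · have h : (fun t => lotW k (Function.update x j t) (some l)) = fun t => t / (k:ℝ) := by
        funext t; subst hl; simp [lotW]
      rw [h]
      simpa [lotB, hl, one_div] using (hasDerivAt_id (x j)).div_const (k:ℝ)
    · have h : (fun t => lotW k (Function.update x j t) (some l)) = fun _ => x l / (k:ℝ) := by
        funext t; simp [lotW, Function.update_of_ne hl]
      rw [h]
      simpa [lotB, hl] using hasDerivAt_const (x j) (x l / (k:ℝ))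
  | none =>
    have h : (fun t => lotW k (Function.update x j t) none)
        = fun t => 1 - (t + ∑ l ∈ Finset.univ.erase j, x l) / (k:ℝ) := by
      funext t
      simp [lotW, Finset.sum_update_of_mem (Finset.mem_univ j)]
    rw [h]
    have := (((hasDerivAt_id (x j)).add_const (∑ l ∈ Finset.univ.erase j, x l)).div_const
      (k:ℝ)).const_sub 1
    simpa [lotB, one_div] using this

lemma lotProj_comp {m t : ℕ} (f : Fin t → Option (Fin m)) (σ : Equiv.Perm (Fin t)) :
    lotProj (f ∘ σ) = lotProj f := by
  ext l
  simp only [lotProj, Finset.mem_filter, Finset.mem_univ, true_and, Function.comp]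
  constructor
  · rintro ⟨s, hs⟩; exact ⟨σ s, hs⟩
  · rintro ⟨s, hs⟩; exact ⟨σ.symm s, by simpa using hs⟩

lemma lotProj_cons_none {m n : ℕ} (g : Fin n → Option (Fin m)) :
    lotProj (Fin.cons none g) = lotProj g := by
  ext l'
  simp [lotProj, Fin.exists_fin_succ]

lemma lotProj_cons_some {m n : ℕ} (b : Fin m) (g : Fin n → Option (Fin m)) :
    lotProj (Fin.cons (some b) g) = insert b (lotProj g) := by
  ext l'
  simp [lotProj, Fin.exists_fin_succ, eq_comm]

lemma erase_zero_eq_image {n : ℕ} :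
    (univ : Finset (Fin (n+1))).erase 0 = univ.image Fin.succ := by
  ext b
  simp [Fin.exists_succ_eq]

lemma lemA {m : ℕ} (k n : ℕ) (u : Finset (Fin m) → ℝ) (j : Fin m) (x : Fin m → ℝ) :
    pd j (fun y => ∑ f : Fin (n+1) → Option (Fin m), lotP k (n+1) y f * u (lotProj f)) x
    = (((n:ℝ)+1)/k) * ∑ g : Fin n → Option (Fin m),
        lotP k n x g * (u (insert j (lotProj g)) - u (lotProj g)) := by
  classical
  have hstep1 : pd j (fun y => ∑ f : Fin (n+1) → Option (Fin m),
        lotP k (n+1) y f * u (lotProj f)) x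
      = ∑ f : Fin (n+1) → Option (Fin m),
          (∑ s : Fin (n+1), (∏ s' ∈ univ.erase s, lotW k x (f s')) * lotB k j (f s))
            * u (lotProj f) := by
    have hD : ∀ f : Fin (n+1) → Option (Fin m),
        HasDerivAt (fun t => lotP k (n+1) (Function.update x j t) f * u (lotProj f))
          ((∑ s : Fin (n+1), (∏ s' ∈ univ.erase s, lotW k x (f s')) * lotB k j (f s))
            * u (lotProj f)) (x j) := by
      intro f
      have h1 := HasDerivAt.finset_prod (𝕜 := ℝ) (u := (univ : Finset (Fin (n+1))))
        (f := fun s t => lotW k (Function.update x j t) (f s))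
        (f' := fun s => lotB k j (f s)) (x := x j)
        (fun s _ => hasDerivAt_lotW k x j (f s))
      simp only [smul_eq_mul, Function.update_eq_self] at h1
      rw [Finset.prod_fn] at h1
      exact h1.mul_const _
    have h2 := HasDerivAt.sum (u := (univ : Finset (Fin (n+1) → Option (Fin m))))
      (fun f _ => hD f)
    rw [Finset.sum_fn] at h2
    exact h2.deriv
  rw [hstep1]
  have hswap : ∑ f : Fin (n+1) → Option (Fin m),
      (∑ s : Fin (n+1), (∏ s' ∈ univ.erase s, lotW k x (f s')) * lotB k j (f s))
        * u (lotProj f)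
      = ∑ s : Fin (n+1), ∑ f : Fin (n+1) → Option (Fin m),
          (∏ s' ∈ univ.erase s, lotW k x (f s')) * lotB k j (f s) * u (lotProj f) := by
    simp_rw [Finset.sum_mul]
    exact Finset.sum_comm
  rw [hswap]
  have hsym : ∀ s : Fin (n+1),
      (∑ f : Fin (n+1) → Option (Fin m),
        (∏ s' ∈ univ.erase s, lotW k x (f s')) * lotB k j (f s) * u (lotProj f))
      = ∑ f : Fin (n+1) → Option (Fin m),
        (∏ s' ∈ univ.erase 0, lotW k x (f s')) * lotB k j (f 0) * u (lotProj f) := by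
    intro s
    set σ : Equiv.Perm (Fin (n+1)) := Equiv.swap 0 s with hσ
    have himg : (univ.erase s).image σ = univ.erase (0 : Fin (n+1)) := by
      rw [Finset.image_erase σ.injective, Finset.image_univ_equiv]
      congr 1
      exact Equiv.swap_apply_right 0 s
    refine (Fintype.sum_equiv (Equiv.arrowCongr σ.symm (Equiv.refl (Option (Fin m))))
      _ _ ?_).symm
    intro g
    have heg : (Equiv.arrowCongr σ.symm (Equiv.refl (Option (Fin m)))) g = g ∘ σ := rfl
    rw [heg]
    have hprod : ∏ s' ∈ univ.erase s, lotW k x ((g ∘ σ) s')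
        = ∏ s'' ∈ univ.erase (0 : Fin (n+1)), lotW k x (g s'') := by
      rw [← himg, Finset.prod_image (fun a _ b _ h => σ.injective h)]
      rfl
    rw [hprod, lotProj_comp g σ]
    have : (g ∘ σ) s = g 0 := by
      simp [Function.comp, hσ, Equiv.swap_apply_right]
    rw [this]
  rw [Finset.sum_congr rfl (fun s _ => hsym s)]
  have hC : ∑ f : Fin (n+1) → Option (Fin m),
      (∏ s' ∈ univ.erase 0, lotW k x (f s')) * lotB k j (f 0) * u (lotProj f)
      = ∑ g : Fin n → Option (Fin m),
          (1/(k:ℝ)) * (lotP k n x g * (u (insert j (lotProj g)) - u (lotProj g))) := by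
    have hprodc : ∀ f : Fin (n+1) → Option (Fin m),
        ∏ s' ∈ (univ : Finset (Fin (n+1))).erase 0, lotW k x (f s')
          = ∏ s : Fin n, lotW k x (f s.succ) := by
      intro f
      rw [erase_zero_eq_image, Finset.prod_image (fun a _ b _ h => Fin.succ_injective n h)]
    have hsum := Fintype.sum_equiv (Fin.consEquiv (fun _ : Fin (n+1) => Option (Fin m)))
      (fun p : Option (Fin m) × (Fin n → Option (Fin m)) =>
        (∏ s' ∈ (univ : Finset (Fin (n+1))).erase 0, lotW k x (Fin.cons (α := fun _ : Fin (n+1) => Option (Fin m)) p.1 p.2 s'))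
          * lotB k j p.1 * u (lotProj (Fin.cons (α := fun _ : Fin (n+1) => Option (Fin m)) p.1 p.2)))
      (fun f => (∏ s' ∈ (univ : Finset (Fin (n+1))).erase 0, lotW k x (f s'))
          * lotB k j (f 0) * u (lotProj f))
      (fun p => by
        rw [show (Fin.consEquiv (fun _ : Fin (n+1) => Option (Fin m))) p
            = Fin.cons (α := fun _ : Fin (n+1) => Option (Fin m)) p.1 p.2 from rfl]
        simp only [Fin.cons_zero])
    rw [← hsum, Fintype.sum_prod_type, Fintype.sum_option]
    simp only [hprodc, Fin.cons_succ, Fin.cons_zero, lotProj_cons_none,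
      lotProj_cons_some, lotB, lotP]
    have hsome : ∑ l : Fin m, ∑ g : Fin n → Option (Fin m),
        ((∏ s : Fin n, lotW k x (g s)) * if l = j then 1/(k:ℝ) else 0) * u (insert l (lotProj g))
        = ∑ g : Fin n → Option (Fin m),
            (∏ s : Fin n, lotW k x (g s)) * (1/(k:ℝ)) * u (insert j (lotProj g)) := by
      rw [Finset.sum_comm]
      refine Finset.sum_congr rfl (fun g _ => ?_)
      simp_rw [mul_ite, mul_zero, ite_mul, zero_mul]
      simp
    rw [hsome, ← Finset.sum_add_distrib]
    refine Finset.sum_congr rfl (fun g _ => ?_)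
    ring
  rw [hC, Finset.sum_const, Finset.card_univ, Fintype.card_fin, nsmul_eq_mul,
    ← Finset.mul_sum]
  push_cast
  ring

theorem stmt11 (m k : ℕ) (hm : 1 ≤ m) (hk : 2 ≤ k) (v : Finset (Fin m) → ℝ)
    (x : Fin m → ℝ) (i j : Fin m) :
    pd i (pd j (lotG k v)) x
      = ((k : ℝ) - 1) / k *
          ∑ S : Finset (Fin m),
            (∑ f ∈ Finset.univ.filter
                (fun f : Fin (k - 2) → Option (Fin m) => lotProj f = S),
              lotP k (k - 2) x f) * dHess v S i j := by
  classical
  obtain ⟨n, rfl⟩ : ∃ n, k = n + 2 := ⟨k - 2, by omega⟩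
  show pd i (pd j (lotG (n+2) v)) x
      = (((n+2 : ℕ) : ℝ) - 1) / ((n+2 : ℕ) : ℝ) *
          ∑ S : Finset (Fin m),
            (∑ f ∈ Finset.univ.filter
                (fun f : Fin n → Option (Fin m) => lotProj f = S),
              lotP (n+2) n x f) * dHess v S i j
  have h1 : pd j (lotG (n+2) v) = fun y =>
      ∑ g : Fin (n+1) → Option (Fin m),
        lotP (n+2) (n+1) y g * ((fun S => v (insert j S) - v S) (lotProj g)) := by
    funext y
    have h := lemA (n+2) (n+1) v j y
    have hg : lotG (n+2) v = fun y => ∑ f : Fin (n+1+1) → Option (Fin m),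
        lotP (n+2) (n+1+1) y f * v (lotProj f) := rfl
    rw [hg, h, Finset.mul_sum]
    refine Finset.sum_congr rfl (fun g _ => ?_)
    have hcoef : (((n+1 : ℕ) : ℝ) + 1) / ((n+2 : ℕ) : ℝ) = 1 := by
      rw [div_eq_one_iff_eq]
      · push_cast; ring
      · push_cast
        positivity
    rw [hcoef, one_mul]
  rw [h1, lemA (n+2) n (fun S => v (insert j S) - v S) i x]
  have hgroup : ∑ h : Fin n → Option (Fin m), lotP (n+2) n x h * dHess v (lotProj h) i j
      = ∑ S : Finset (Fin m),
          (∑ f ∈ Finset.univ.filter (fun f : Fin n → Option (Fin m) => lotProj f = S),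
            lotP (n+2) n x f) * dHess v S i j := by
    rw [← Finset.sum_fiberwise Finset.univ (fun h : Fin n → Option (Fin m) => lotProj h)
      (fun h => lotP (n+2) n x h * dHess v (lotProj h) i j)]
    refine Finset.sum_congr rfl (fun S _ => ?_)
    rw [Finset.sum_mul]
    exact Finset.sum_congr rfl (fun f hf => by rw [(Finset.mem_filter.1 hf).2])
  rw [← hgroup, Finset.mul_sum, Finset.mul_sum]
  refine Finset.sum_congr rfl (fun g _ => ?_)
  have hA : lotProj g ∪ {i, j} = insert j (insert i (lotProj g)) := by
    ext a
    simp only [Finset.mem_insert, Finset.mem_union, Finset.mem_singleton]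
    tauto
  have hB : lotProj g ∪ {i} = insert i (lotProj g) := by
    ext a
    simp only [Finset.mem_insert, Finset.mem_union, Finset.mem_singleton]
    tauto
  have hC : lotProj g ∪ {j} = insert j (lotProj g) := by
    ext a
    simp only [Finset.mem_insert, Finset.mem_union, Finset.mem_singleton]
    tauto
  simp only [dHess, hA, hB, hC]
  push_cast
  ring
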